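/- Let W be an n-dimensional real vector space, Δ = {v_1,...,v_d} a finite set, and τ : Δ → W an injective map whose values τ(v_1),...,τ(v_d) have pairwise differences invertible in the fraction field Q(W) of the symmetric algebra S(W). Define for g : Δ → Q(W) the integral ∫_Δ g = ∑_k g(v_k)/∏_{j≠k}(τ(v_k) − τ(v_j)), and let H(Δ,τ) be the set of maps g such that ∫_Δ (g · P(τ)) ∈ S(W) for all polynomials P ∈ S(W)[Y] (where P(τ) denotes the map v ↦ P evaluated at Y = τ(v)). Then g ∈ H(Δ,τ) if and only if there exist g_0,...,g_{d-1} ∈ S(W) with g(v) = ∑_{k=0}^{d-1} g_k τ(v)^k for all v ∈ Δ. -/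

import Mathlib

set_option maxHeartbeats 1000000

open Finset

section Aux

open Polynomial

variable {K : Type*} [Field K]

private lemma stmt8_coeff_lagrange_basis {d : ℕ} (x : Fin d → K) (k : Fin d) :
    (Lagrange.basis univ x k).coeff (d - 1) = (∏ j ∈ univ.erase k, (x k - x j))⁻¹ := by
  unfold Lagrange.basis Lagrange.basisDivisor
  rw [prod_mul_distrib, ← map_prod]
  have h1 : (∏ j ∈ univ.erase k, (X - C (x j))).Monic :=
    monic_prod_of_monic _ _ fun j _ => monic_X_sub_C _
  have h2 : (∏ j ∈ univ.erase k, (X - C (x j))).natDegree = d - 1 := by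
    rw [natDegree_prod_of_monic _ _ fun j _ => monic_X_sub_C _]
    simp [natDegree_X_sub_C, card_erase_of_mem, card_univ]
  rw [coeff_C_mul, ← h2, h1.coeff_natDegree, mul_one, Finset.prod_inv_distrib]

private lemma stmt8_intA {d : ℕ} (hd : 0 < d) {x : Fin d → K} (hx : Function.Injective x)
    (f : K[X]) :
    ∑ k : Fin d, f.eval (x k) / ∏ j ∈ univ.erase k, (x k - x j)
      = (f %ₘ ∏ j : Fin d, (X - C (x j))).coeff (d - 1) := by
  set N : K[X] := ∏ j : Fin d, (X - C (x j)) with hNdef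
  have hN : N.Monic := monic_prod_of_monic _ _ fun j _ => monic_X_sub_C _
  have hNdeg : N.degree = (d : ℕ) := by
    rw [degree_eq_natDegree hN.ne_zero]
    norm_cast
    rw [hNdef, natDegree_prod_of_monic _ _ fun j _ => monic_X_sub_C _]
    simp [natDegree_X_sub_C]
  set r := f %ₘ N with hr
  have heval : ∀ k, f.eval (x k) = r.eval (x k) := by
    intro k
    conv_lhs => rw [← modByMonic_add_div f N]
    have hz : N.eval (x k) = 0 := by
      rw [hNdef, eval_prod]
      exact Finset.prod_eq_zero (mem_univ k) (by simp)
    simp [eval_add, eval_mul, hz, hr]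
  have hrdeg : r.degree < (d : ℕ) := hNdeg ▸ degree_modByMonic_lt f hN
  have hri : r = Lagrange.interpolate univ x fun k => r.eval (x k) := by
    refine Lagrange.eq_interpolate hx.injOn ?_
    simpa [card_univ] using hrdeg
  calc ∑ k : Fin d, f.eval (x k) / ∏ j ∈ univ.erase k, (x k - x j)
      = ∑ k : Fin d, r.eval (x k) * (∏ j ∈ univ.erase k, (x k - x j))⁻¹ := by
        simp_rw [div_eq_mul_inv, heval]
    _ = (Lagrange.interpolate univ x (fun k => r.eval (x k))).coeff (d - 1) := by
        rw [Lagrange.interpolate_apply, finset_sum_coeff]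
        refine Finset.sum_congr rfl fun k _ => ?_
        rw [coeff_C_mul, stmt8_coeff_lagrange_basis]
    _ = r.coeff (d - 1) := by rw [← hri]

private lemma stmt8_lemB {A : Type*} [CommRing A] (φ : A →+* K) {d : ℕ} (hd : 0 < d)
    {N' : A[X]} (hN' : N'.Monic) (hNd : (N'.map φ).natDegree = d)
    (f : K[X]) (hf : ∀ t, d ≤ t → f.coeff t ∈ Set.range φ) :
    ∃ a ∈ Set.range φ, (f %ₘ N'.map φ).coeff (d - 1) = f.coeff (d - 1) + a := by
  set N : K[X] := N'.map φ with hNdef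
  have hN : N.Monic := hN'.map φ
  have hNdeg : N.degree = (d : ℕ) := by
    rw [degree_eq_natDegree hN.ne_zero, hNd]
  set flo := f %ₘ X ^ d with hflo
  have hlodeg : flo.degree < (d : ℕ) := by
    simpa [degree_X_pow] using degree_modByMonic_lt f (monic_X_pow d)
  set fhi := f - flo with hfhi
  have hsplit : f = fhi + flo := by ring
  have hhi_coeff : ∀ t, fhi.coeff t = if d ≤ t then f.coeff t else 0 := by
    intro t
    rcases le_or_gt d t with h | h
    · have : flo.coeff t = 0 := coeff_eq_zero_of_degree_lt (hlodeg.trans_le (by exact_mod_cast h))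
      simp [hfhi, this, h]
    · have hf2 : f.coeff t = flo.coeff t := by
        conv_lhs => rw [← modByMonic_add_div f (X ^ d)]
        rw [coeff_add, mul_comm, coeff_mul_X_pow', if_neg (by omega), add_zero]
      simp [hfhi, hf2, not_le.2 h]
  have hlift : fhi ∈ lifts φ := by
    rw [lifts_iff_coeff_lifts]
    intro t
    rw [hhi_coeff]
    split
    · exact hf t ‹_›
    · exact ⟨0, by simp⟩
  obtain ⟨fhi', hfhi'⟩ := (mem_lifts _).1 hlift
  have hmod : f %ₘ N = fhi %ₘ N + flo := by
    conv_lhs => rw [hsplit]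
    rw [add_modByMonic]
    congr 1
    exact (modByMonic_eq_self_iff hN).2 (by rw [hNdeg]; exact hlodeg)
  have hmap : fhi %ₘ N = (fhi' %ₘ N').map φ := by
    rw [map_modByMonic φ hN', hfhi']
  refine ⟨(fhi %ₘ N).coeff (d - 1), ?_, ?_⟩
  · rw [hmap, coeff_map]; exact ⟨_, rfl⟩
  · have hflo_top : flo.coeff (d - 1) = f.coeff (d - 1) := by
      have := hhi_coeff (d - 1)
      rw [if_neg (by omega)] at this
      have h2 : fhi.coeff (d-1) = f.coeff (d-1) - flo.coeff (d-1) := by simp [hfhi]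
      have h3 : f.coeff (d-1) - flo.coeff (d-1) = 0 := by rw [← h2]; exact this
      exact (sub_eq_zero.mp h3).symm
    rw [hmod, coeff_add, hflo_top]; ring

end Aux
theorem stmt8 (n d : ℕ) (τ : Fin d → MvPolynomial (Fin n) ℝ)
    (hτ : Function.Injective τ) (g : Fin d → FractionRing (MvPolynomial (Fin n) ℝ)) :
    let S := MvPolynomial (Fin n) ℝ
    let Q := FractionRing S
    let aτ : Fin d → Q := fun k => algebraMap S Q (τ k)
    (∀ P : Polynomial S, ∃ s : S,
        ∑ k : Fin d,
            g k * algebraMap S Q (P.eval (τ k)) /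
              ∏ j ∈ Finset.univ.erase k, (aτ k - aτ j) =
          algebraMap S Q s) ↔
      ∃ c : Fin d → S, ∀ v : Fin d,
        g v = ∑ k : Fin d, algebraMap S Q (c k) * (aτ v) ^ (k : ℕ) := by
  intro S Q aτ
  classical
  rcases Nat.eq_zero_or_pos d with hd | hd
  · subst hd
    constructor
    · intro _
      exact ⟨fun k => 0, fun v => v.elim0⟩
    · intro _ P
      exact ⟨0, by simp⟩
  · have hφ : Function.Injective (algebraMap S Q) := IsFractionRing.injective S Q
    have hx : Function.Injective aτ := fun a b h => hτ (hφ h)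
    set N' : Polynomial S := ∏ j : Fin d, (Polynomial.X - Polynomial.C (τ j)) with hN'def
    have hN' : N'.Monic :=
      Polynomial.monic_prod_of_monic _ _ fun j _ => Polynomial.monic_X_sub_C _
    have hmapN : N'.map (algebraMap S Q) = ∏ j : Fin d, (Polynomial.X - Polynomial.C (aτ j)) := by
      rw [hN'def, Polynomial.map_prod]
      simp [Polynomial.map_sub]
      rfl
    have hNd : (N'.map (algebraMap S Q)).natDegree = d := by
      rw [hmapN, Polynomial.natDegree_prod_of_monic _ _
        fun j _ => Polynomial.monic_X_sub_C _]
      simp [Polynomial.natDegree_X_sub_C]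
    constructor
    · intro h
      set L := Lagrange.interpolate univ aτ g with hL
      have hgL : ∀ k, g k = L.eval (aτ k) := fun k =>
        (Lagrange.eval_interpolate_at_node g hx.injOn (mem_univ k)).symm
      have hLdeg : L.degree < (d : ℕ) := by
        simpa only [card_univ, Fintype.card_fin] using
          Lagrange.degree_interpolate_lt (s := univ) g hx.injOn
      have key : ∀ i : ℕ, L.coeff (d - 1 - i) ∈ Set.range (algebraMap S Q) := by
        intro i
        induction i using Nat.strong_induction_on with
        | _ i ih =>
          set k := d - 1 - i with hk
          set m := d - 1 - k with hm
          have hkd : k ≤ d - 1 := Nat.sub_le _ _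
          have hmd : m ≤ d - 1 := Nat.sub_le _ _
          have hmi : m ≤ i := by omega
          have hhi : ∀ t, d ≤ t →
              (L * Polynomial.X ^ m).coeff t ∈ Set.range (algebraMap S Q) := by
            intro t ht
            rw [Polynomial.coeff_mul_X_pow', if_pos (by omega)]
            rcases le_or_gt d (t - m) with h2 | h2
            · rw [Polynomial.coeff_eq_zero_of_degree_lt
                (hLdeg.trans_le (by exact_mod_cast h2))]
              exact ⟨0, map_zero _⟩
            · have hj : t - m = d - 1 - (d - 1 - (t - m)) := by omega
              rw [hj]
              exact ih (d - 1 - (t - m)) (by omega)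
          obtain ⟨s, hs⟩ := h (Polynomial.X ^ m)
          have hval : ∀ k' : Fin d,
              g k' * algebraMap S Q ((Polynomial.X ^ m : Polynomial S).eval (τ k'))
                = (L * Polynomial.X ^ m).eval (aτ k') := by
            intro k'
            rw [Polynomial.eval_pow, Polynomial.eval_X, map_pow, Polynomial.eval_mul,
              Polynomial.eval_pow, Polynomial.eval_X, ← hgL]
          rw [Finset.sum_congr rfl (fun k' _ => by rw [hval k'])] at hs
          rw [stmt8_intA hd hx (L * Polynomial.X ^ m), ← hmapN] at hs
          obtain ⟨a, ha, hcoeff⟩ :=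
            stmt8_lemB (algebraMap S Q) hd hN' hNd (L * Polynomial.X ^ m) hhi
          rw [hcoeff] at hs
          have hLc : (L * Polynomial.X ^ m).coeff (d - 1) = L.coeff k := by
            rw [Polynomial.coeff_mul_X_pow', if_pos (by omega)]
            congr 1
            omega
          rw [hLc] at hs
          obtain ⟨b, hb⟩ := ha
          refine ⟨s - b, ?_⟩
          rw [map_sub, hb]
          exact ((eq_sub_of_add_eq hs).symm)
      have keyk : ∀ k : Fin d, ∃ s : S, algebraMap S Q s = L.coeff (k : ℕ) := by
        intro k
        have h1 := key (d - 1 - (k : ℕ))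
        have h2 : d - 1 - (d - 1 - (k : ℕ)) = (k : ℕ) := by
          have := k.isLt; omega
        rw [h2] at h1
        exact h1
      choose c hc using keyk
      refine ⟨c, fun v => ?_⟩
      have hnat : L.natDegree < d := by
        rcases eq_or_ne L 0 with h0 | h0
        · simpa [h0] using hd
        · exact (Polynomial.natDegree_lt_iff_degree_lt h0).2 (by exact_mod_cast hLdeg)
      rw [hgL v, Polynomial.eval_eq_sum_range' hnat,
        ← Fin.sum_univ_eq_sum_range (fun i => L.coeff i * (aτ v) ^ i) d]
      exact Finset.sum_congr rfl fun k _ => by rw [hc k]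
    · rintro ⟨c, hc⟩ P
      set G : Polynomial S := ∑ k : Fin d, Polynomial.C (c k) * Polynomial.X ^ (k : ℕ) with hG
      have hGe : ∀ v, g v = algebraMap S Q (G.eval (τ v)) := by
        intro v
        rw [hc v, hG, Polynomial.eval_finset_sum, map_sum]
        refine Finset.sum_congr rfl fun k _ => ?_
        rw [Polynomial.eval_mul, Polynomial.eval_pow, Polynomial.eval_C, Polynomial.eval_X,
          map_mul, map_pow]
      refine ⟨((G * P) %ₘ N').coeff (d - 1), ?_⟩
      have hnum : ∀ k : Fin d, g k * algebraMap S Q (P.eval (τ k))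
          = ((G * P).map (algebraMap S Q)).eval (aτ k) := by
        intro k
        rw [hGe k, ← map_mul, ← Polynomial.eval_mul, Polynomial.eval_map,
          Polynomial.eval₂_at_apply]
      rw [Finset.sum_congr rfl fun k _ => by rw [hnum k]]
      rw [stmt8_intA hd hx ((G * P).map (algebraMap S Q)), ← hmapN,
        ← Polynomial.map_modByMonic _ hN', Polynomial.coeff_map]
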